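/- Let s : ℝ → (0, ∞) be continuous with d̲ ≤ s(y1) ≤ d̄ for positive constants d̲, d̄, s(y1) → 1 as y1 → -∞ and s(y1) → σ > 0 as y1 → +∞, and let f be Lipschitz with f(0) ≤ 0 ≤ f(𝔠). For each y1 let φ^{y1} be the unique solution of (φ^{y1})'' = s(y1)² f(φ^{y1}), φ^{y1}(0) = 0, φ^{y1}(1) = 𝔠, 0 < φ^{y1} < 𝔠. Then there exists γ > 0 with liminf_{y1 → ±∞} min_{[0,1]} (φ^{y1})' ≥ γ. -/

import Mathlib

open Set Filter Topology


/-- Max principle: if h(0),h(1) ≥ 0 and h'' < 0 wherever h < 0, then h ≥ 0 on [0,1]. -/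
lemma aux_minprin (h h' h'' : ℝ → ℝ)
    (hd1 : ∀ t ∈ Icc (0:ℝ) 1, HasDerivAt h (h' t) t)
    (hd2 : ∀ t ∈ Icc (0:ℝ) 1, HasDerivAt h' (h'' t) t)
    (h0 : 0 ≤ h 0) (h1 : 0 ≤ h 1)
    (hneg : ∀ t ∈ Icc (0:ℝ) 1, h t < 0 → h'' t < 0) :
    ∀ t ∈ Icc (0:ℝ) 1, 0 ≤ h t := by
  by_contra hcon
  push_neg at hcon
  obtain ⟨τ0, hτ0, hτ0neg⟩ := hcon
  have hcont : ContinuousOn h (Icc 0 1) := fun t ht => ((hd1 t ht).continuousAt).continuousWithinAt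
  obtain ⟨τ, hτmem, hτmin⟩ := (isCompact_Icc (a := (0:ℝ)) (b := 1)).exists_isMinOn
    (nonempty_Icc.2 zero_le_one) hcont
  have hτneg : h τ < 0 := lt_of_le_of_lt (hτmin hτ0) hτ0neg
  have hτne0 : τ ≠ 0 := fun e => absurd (e ▸ hτneg) (not_lt.2 h0)
  have hτne1 : τ ≠ 1 := fun e => absurd (e ▸ hτneg) (not_lt.2 h1)
  have hτint : τ ∈ Ioo (0:ℝ) 1 :=
    ⟨lt_of_le_of_ne hτmem.1 (Ne.symm hτne0), lt_of_le_of_ne hτmem.2 hτne1⟩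
  have hnhds : Icc (0:ℝ) 1 ∈ 𝓝 τ := Icc_mem_nhds hτint.1 hτint.2
  have hlocmin : IsLocalMin h τ := hτmin.isLocalMin hnhds
  have hder0 : h' τ = 0 := hlocmin.hasDerivAt_eq_zero (hd1 τ hτmem)
  have hsecneg : h'' τ < 0 := hneg τ hτmem hτneg
  -- slope of h' tends to h'' τ < 0, so h' < 0 just right of τ
  have hslope := hasDerivAt_iff_tendsto_slope.1 (hd2 τ hτmem)
  have hev : ∀ᶠ t in 𝓝[≠] τ, slope h' τ t < 0 :=
    hslope.eventually_lt_const hsecneg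
  have hev' : ∀ᶠ t in 𝓝[>] τ, h' t < 0 := by
    filter_upwards [nhdsWithin_mono τ (fun t (ht : t ∈ Ioi τ) => ne_of_gt ht) hev,
      self_mem_nhdsWithin] with t ht (ht2 : τ < t)
    have : slope h' τ t = h' t / (t - τ) := by
      rw [slope_def_field, hder0]; ring_nf
    rw [this] at ht
    have := mul_neg_of_neg_of_pos ht (sub_pos.2 ht2)
    rwa [div_mul_cancel₀ _ (ne_of_gt (sub_pos.2 ht2))] at this
  obtain ⟨b, hsub, hb⟩ := mem_nhdsGT_iff_exists_Ioo_subset.1 hev'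
  have hbτ : τ < b := hsub
  set t1 : ℝ := min ((τ + b)/2) 1 with ht1def
  have ht1τ : τ < t1 := lt_min (by linarith) hτint.2
  have ht1b : t1 < b := lt_of_le_of_lt (min_le_left _ _) (by linarith)
  have ht1le1 : t1 ≤ 1 := min_le_right _ _
  have ht1mem : t1 ∈ Icc (0:ℝ) 1 := ⟨le_trans hτmem.1 (le_of_lt ht1τ), ht1le1⟩
  have hsubI : Icc τ t1 ⊆ Icc (0:ℝ) 1 := fun x hx => ⟨le_trans hτmem.1 hx.1, le_trans hx.2 ht1le1⟩
  obtain ⟨ξ, hξ, hξeq⟩ := exists_hasDerivAt_eq_slope h h' ht1τ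
    (hcont.mono hsubI) (fun x hx => hd1 x (hsubI ⟨le_of_lt hx.1, le_of_lt hx.2⟩))
  have hξneg : h' ξ < 0 := hb ⟨hξ.1, lt_trans hξ.2 ht1b⟩
  have : h t1 - h τ < 0 := by
    have hpos : (0:ℝ) < t1 - τ := sub_pos.2 ht1τ
    have := hξeq ▸ hξneg
    have h2 := (div_neg_iff.1 this)
    rcases h2 with ⟨hn, hp⟩ | ⟨hn, hp⟩
    · linarith
    · linarith
  have hge : h τ ≤ h t1 := hτmin ht1mem
  linarith



lemma aux_slope0 (h : ℝ → ℝ) (d : ℝ) (hpos : ∀ t ∈ Icc (0:ℝ) 1, 0 ≤ h t)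
    (h0 : h 0 = 0) (hd : HasDerivAt h d 0) : 0 ≤ d := by
  have hs := hasDerivAt_iff_tendsto_slope.1 hd
  have hs' : Tendsto (slope h 0) (𝓝[>] 0) (𝓝 d) :=
    hs.mono_left (nhdsWithin_mono 0 (fun t (ht : t ∈ Ioi (0:ℝ)) => ne_of_gt ht))
  refine ge_of_tendsto hs' ?_
  filter_upwards [Ioo_mem_nhdsGT_of_mem (Set.left_mem_Ico.2 zero_lt_one)] with t ht
  rw [slope_def_field, h0]
  have h1' := hpos t ⟨le_of_lt ht.1, le_of_lt ht.2⟩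
  rw [sub_zero, sub_zero]
  exact div_nonneg h1' (le_of_lt ht.1)

lemma aux_slope1 (h : ℝ → ℝ) (d : ℝ) (hpos : ∀ t ∈ Icc (0:ℝ) 1, 0 ≤ h t)
    (h1 : h 1 = 0) (hd : HasDerivAt h d 1) : d ≤ 0 := by
  have hs := hasDerivAt_iff_tendsto_slope.1 hd
  have hs' : Tendsto (slope h 1) (𝓝[<] 1) (𝓝 d) :=
    hs.mono_left (nhdsWithin_mono 1 (fun t (ht : t ∈ Iio (1:ℝ)) => ne_of_lt ht))
  refine le_of_tendsto hs' ?_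
  filter_upwards [Ioo_mem_nhdsLT_of_mem (Set.right_mem_Ioc.2 zero_lt_one)] with t ht
  rw [slope_def_field, h1]
  have h1' := hpos t ⟨le_of_lt ht.1, le_of_lt ht.2⟩
  have h2 : t - 1 < 0 := by linarith [ht.2]
  rw [sub_zero, div_nonpos_iff]
  left; exact ⟨h1', le_of_lt h2⟩

lemma aux_barrier (𝔠 c L : ℝ) (h𝔠 : 0 < 𝔠) (hc : 0 < c) (hL : 1 ≤ L)
    (f : ℝ → ℝ) (K : NNReal) (hf : LipschitzWith K f) (hf0 : f 0 ≤ 0) (hcK : c * K ≤ L)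
    (u u' u'' : ℝ → ℝ)
    (hd1 : ∀ t ∈ Icc (0:ℝ) 1, HasDerivAt u (u' t) t)
    (hd2 : ∀ t ∈ Icc (0:ℝ) 1, HasDerivAt u' (u'' t) t)
    (hueq : ∀ t ∈ Icc (0:ℝ) 1, u'' t = c * f (u t))
    (hu0 : u 0 = 0) (hu1 : u 1 = 𝔠)
    (hup : ∀ t ∈ Icc (0:ℝ) 1, 0 ≤ u t) :
    (∀ t ∈ Icc (0:ℝ) 1,
      𝔠 * Real.sinh (Real.sqrt L * t) / Real.sinh (Real.sqrt L) ≤ u t)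
    ∧ 𝔠 * Real.sqrt L / Real.sinh (Real.sqrt L) ≤ u' 0 := by
  set l := Real.sqrt L with hldef
  have hL0 : (0:ℝ) < L := lt_of_lt_of_le zero_lt_one hL
  have hl1 : 1 ≤ l := by
    rw [hldef, show (1:ℝ) = Real.sqrt 1 by simp]
    exact Real.sqrt_le_sqrt hL
  have hl0 : 0 < l := lt_of_lt_of_le zero_lt_one hl1
  have hl2 : l ^ 2 = L := Real.sq_sqrt (le_of_lt hL0)
  have hS : 0 < Real.sinh l := Real.sinh_pos_iff.2 hl0
  set w : ℝ → ℝ := fun t => 𝔠 * Real.sinh (l * t) / Real.sinh l with hwdef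
  set w' : ℝ → ℝ := fun t => 𝔠 * (Real.cosh (l * t) * l) / Real.sinh l with hw'def
  set w'' : ℝ → ℝ := fun t => 𝔠 * (Real.sinh (l * t) * l ^ 2) / Real.sinh l with hw''def
  have hwd1 : ∀ t : ℝ, HasDerivAt w (w' t) t := by
    intro t
    have h1 : HasDerivAt (fun x : ℝ => l * x) (l * 1) t := (hasDerivAt_id t).const_mul l
    have h2 := (Real.hasDerivAt_sinh (l * t)).comp t h1
    have h3 := (h2.const_mul 𝔠).div_const (Real.sinh l)
    refine h3.congr_deriv ?_
    simp only [hw'def]; ring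
  have hwd2 : ∀ t : ℝ, HasDerivAt w' (w'' t) t := by
    intro t
    have h1 : HasDerivAt (fun x : ℝ => l * x) (l * 1) t := (hasDerivAt_id t).const_mul l
    have h2 := (Real.hasDerivAt_cosh (l * t)).comp t h1
    have h3 := ((h2.mul_const l).const_mul 𝔠).div_const (Real.sinh l)
    refine h3.congr_deriv ?_
    simp only [hw''def]; ring
  have key : ∀ t ∈ Icc (0:ℝ) 1, 0 ≤ u t - w t := by
    refine aux_minprin (fun t => u t - w t) (fun t => u' t - w' t) (fun t => u'' t - w'' t)
      (fun t ht => (hd1 t ht).sub (hwd1 t)) (fun t ht => (hd2 t ht).sub (hwd2 t)) ?_ ?_ ?_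
    · simp [hwdef, hu0]
    · simp [hwdef, hu1, mul_div_assoc, div_self (ne_of_gt hS)]
    · intro t ht hneg
      have hfu : f (u t) ≤ (K : ℝ) * u t := by
        have := hf.dist_le_mul (u t) 0
        rw [Real.dist_eq, Real.dist_eq, sub_zero] at this
        have h2 : f (u t) - f 0 ≤ (K : ℝ) * |u t| := le_trans (le_abs_self _) this
        rw [abs_of_nonneg (hup t ht)] at h2
        linarith
      have hu'' : u'' t ≤ L * u t := by
        rw [hueq t ht]
        calc c * f (u t) ≤ c * ((K : ℝ) * u t) := by
              exact mul_le_mul_of_nonneg_left hfu (le_of_lt hc)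
          _ = (c * (K : ℝ)) * u t := by ring
          _ ≤ L * u t := mul_le_mul_of_nonneg_right hcK (hup t ht)
      have hw'' : w'' t = L * w t := by simp only [hw''def, hwdef]; rw [← hl2]; ring
      have : u'' t - w'' t ≤ L * (u t - w t) := by rw [hw'']; linarith
      calc u'' t - w'' t ≤ L * (u t - w t) := this
        _ < 0 := mul_neg_of_pos_of_neg hL0 hneg
  constructor
  · intro t ht; have := key t ht; simp only [hwdef] at this; linarith
  · have hD : HasDerivAt (fun t => u t - w t) (u' 0 - w' 0) 0 :=
      (hd1 0 (by norm_num)).sub (hwd1 0)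
    have h0 : u 0 - w 0 = 0 := by simp [hwdef, hu0]
    have := aux_slope0 (fun t => u t - w t) (u' 0 - w' 0) key h0 hD
    have hw'0 : w' 0 = 𝔠 * l / Real.sinh l := by simp [hw'def]
    rw [hw'0] at this
    linarith

lemma aux_middle (𝔠 c L : ℝ) (h𝔠 : 0 < 𝔠) (hc : 0 < c) (hL : 1 ≤ L)
    (f : ℝ → ℝ) (K : NNReal) (hf : LipschitzWith K f) (hf0 : f 0 ≤ 0) (hcK : c * K ≤ L)
    (u u' u'' : ℝ → ℝ)
    (hd1 : ∀ t ∈ Icc (0:ℝ) 1, HasDerivAt u (u' t) t)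
    (hd2 : ∀ t ∈ Icc (0:ℝ) 1, HasDerivAt u' (u'' t) t)
    (hueq : ∀ t ∈ Icc (0:ℝ) 1, u'' t = c * f (u t))
    (hu0 : u 0 = 0) (hu1 : u 1 = 𝔠)
    (hup : ∀ t ∈ Icc (0:ℝ) 1, 0 ≤ u t)
    (t0 : ℝ) (ht0 : 0 < t0) (ht0h : t0 ≤ 1/2) :
    𝔠 * L * t0 / (Real.sinh (Real.sqrt L) * Real.exp (Real.sqrt L)) ≤ |u' t0| := by
  set l := Real.sqrt L with hldef
  have hL0 : (0:ℝ) < L := lt_of_lt_of_le zero_lt_one hL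
  have hl1 : 1 ≤ l := by
    rw [hldef, show (1:ℝ) = Real.sqrt 1 by simp]
    exact Real.sqrt_le_sqrt hL
  have hl0 : 0 < l := lt_of_lt_of_le zero_lt_one hl1
  have hl2 : l ^ 2 = L := Real.sq_sqrt (le_of_lt hL0)
  have hS : 0 < Real.sinh l := Real.sinh_pos_iff.2 hl0
  -- membership helpers
  have hmem : ∀ t ∈ Icc t0 (2*t0), t ∈ Icc (0:ℝ) 1 :=
    fun t ht => ⟨le_trans (le_of_lt ht0) ht.1, le_trans ht.2 (by linarith)⟩
  have hmem' : ∀ t ∈ Icc t0 (2*t0), 2*t0 - t ∈ Icc (0:ℝ) 1 :=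
    fun t ht => ⟨by linarith [ht.2], by linarith [ht.1, ht0]⟩
  set Z : ℝ → ℝ × ℝ := fun t => (l * (u t - u (2*t0 - t)), u' t + u' (2*t0 - t)) with hZdef
  set Z' : ℝ → ℝ × ℝ := fun t => (l * (u' t + u' (2*t0 - t)), u'' t - u'' (2*t0 - t)) with hZ'def
  have hrefl : ∀ t ∈ Icc t0 (2*t0), HasDerivAt (fun x => u (2*t0 - x)) (-(u' (2*t0 - t))) t := by
    intro t ht
    have hin : HasDerivAt (fun x : ℝ => 2*t0 - x) (-1) t := (hasDerivAt_id t).const_sub (2*t0)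
    have := (hd1 (2*t0 - t) (hmem' t ht)).comp t hin
    exact this.congr_deriv (by ring)
  have hrefl' : ∀ t ∈ Icc t0 (2*t0), HasDerivAt (fun x => u' (2*t0 - x)) (-(u'' (2*t0 - t))) t := by
    intro t ht
    have hin : HasDerivAt (fun x : ℝ => 2*t0 - x) (-1) t := (hasDerivAt_id t).const_sub (2*t0)
    have := (hd2 (2*t0 - t) (hmem' t ht)).comp t hin
    exact this.congr_deriv (by ring)
  have hZd : ∀ t ∈ Icc t0 (2*t0), HasDerivAt Z (Z' t) t := by
    intro t ht
    have h1 : HasDerivAt (fun x => u x - u (2*t0 - x)) (u' t + u' (2*t0 - t)) t := by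
      have := (hd1 t (hmem t ht)).sub (hrefl t ht)
      exact this.congr_deriv (by ring)
    have h2 : HasDerivAt (fun x => u' x + u' (2*t0 - x)) (u'' t - u'' (2*t0 - t)) t := by
      have := (hd2 t (hmem t ht)).add (hrefl' t ht)
      exact this.congr_deriv (by ring)
    exact (h1.const_mul l).prodMk h2
  have hZc : ContinuousOn Z (Icc t0 (2*t0)) :=
    fun t ht => ((hZd t ht).continuousAt).continuousWithinAt
  have hZt0 : ‖Z t0‖ ≤ 2 * |u' t0| := by
    have : Z t0 = (0, 2 * u' t0) := by
      simp only [hZdef]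
      norm_num [show 2*t0 - t0 = t0 by ring]
      ring
    rw [this, Prod.norm_def]
    simp [Real.norm_eq_abs, abs_mul]
  have hbound : ∀ t ∈ Ico t0 (2*t0), ‖Z' t‖ ≤ l * ‖Z t‖ + 0 := by
    intro t ht
    have ht' : t ∈ Icc t0 (2*t0) := ⟨ht.1, le_of_lt ht.2⟩
    rw [add_zero, Prod.norm_def, Prod.norm_def]
    simp only [hZdef, hZ'def, Real.norm_eq_abs]
    have e1 : |l * (u' t + u' (2*t0 - t))| ≤ l * max (|l * (u t - u (2*t0 - t))|) (|u' t + u' (2*t0 - t)|) := by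
      rw [abs_mul, abs_of_pos hl0]
      exact mul_le_mul_of_nonneg_left (le_max_right _ _) (le_of_lt hl0)
    have e2 : |u'' t - u'' (2*t0 - t)| ≤ l * max (|l * (u t - u (2*t0 - t))|) (|u' t + u' (2*t0 - t)|) := by
      rw [hueq t (hmem t ht'), hueq (2*t0 - t) (hmem' t ht')]
      have hlip : |f (u t) - f (u (2*t0 - t))| ≤ (K:ℝ) * |u t - u (2*t0 - t)| := by
        have := hf.dist_le_mul (u t) (u (2*t0 - t))
        rwa [Real.dist_eq, Real.dist_eq] at this
      calc |c * f (u t) - c * f (u (2*t0 - t))| = c * |f (u t) - f (u (2*t0 - t))| := by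
            rw [← mul_sub, abs_mul, abs_of_pos hc]
        _ ≤ c * ((K:ℝ) * |u t - u (2*t0 - t)|) :=
            mul_le_mul_of_nonneg_left hlip (le_of_lt hc)
        _ = (c * (K:ℝ)) * |u t - u (2*t0 - t)| := by ring
        _ ≤ L * |u t - u (2*t0 - t)| := mul_le_mul_of_nonneg_right hcK (abs_nonneg _)
        _ = l * |l * (u t - u (2*t0 - t))| := by
            rw [abs_mul, abs_of_pos hl0, ← hl2]; ring
        _ ≤ l * max (|l * (u t - u (2*t0 - t))|) (|u' t + u' (2*t0 - t)|) :=
            mul_le_mul_of_nonneg_left (le_max_left _ _) (le_of_lt hl0)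
    exact max_le e1 e2
  have hgron := norm_le_gronwallBound_of_norm_deriv_right_le hZc
    (fun x hx => (hZd x ⟨hx.1, le_of_lt hx.2⟩).hasDerivWithinAt) hZt0 hbound
  have hfin := hgron (2*t0) ⟨by linarith, le_refl _⟩
  rw [gronwallBound_ε0] at hfin
  -- lower bound on ‖Z (2t0)‖
  have hZ2 : l * u (2*t0) ≤ ‖Z (2*t0)‖ := by
    have h0 : (2*t0 - 2*t0 : ℝ) = 0 := by ring
    have : Z (2*t0) = (l * u (2*t0), u' (2*t0) + u' 0) := by
      simp only [hZdef, h0, hu0, sub_zero]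
    rw [this, Prod.norm_def]
    refine le_trans ?_ (le_max_left _ _)
    rw [Real.norm_eq_abs]
    exact le_abs_self _
  -- barrier lower bound at 2 t0
  have hbar := (aux_barrier 𝔠 c L h𝔠 hc hL f K hf hf0 hcK u u' u'' hd1 hd2 hueq hu0 hu1 hup).1
    (2*t0) ⟨by linarith, by linarith⟩
  have hsinh : l * (2*t0) ≤ Real.sinh (l * (2*t0)) :=
    le_of_lt ((Real.self_lt_sinh_iff).2 (by positivity))
  have hlow : 𝔠 * (l * (2*t0)) / Real.sinh l ≤ u (2*t0) := by
    refine le_trans ?_ hbar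
    exact (div_le_div_iff_of_pos_right hS).2 (mul_le_mul_of_nonneg_left hsinh (le_of_lt h𝔠))
  -- combine the chain
  have hA : l * (𝔠 * (l * (2*t0)) / Real.sinh l) ≤ l * u (2*t0) :=
    mul_le_mul_of_nonneg_left hlow (le_of_lt hl0)
  have hD : Real.exp (l * (2*t0 - t0)) ≤ Real.exp l := by
    rw [Real.exp_le_exp]
    nlinarith
  have hmabs : (0:ℝ) ≤ |u' t0| := abs_nonneg _
  have hcomb : l * (𝔠 * (l * (2*t0)) / Real.sinh l) ≤ 2 * |u' t0| * Real.exp l := by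
    calc l * (𝔠 * (l * (2*t0)) / Real.sinh l) ≤ l * u (2*t0) := hA
      _ ≤ ‖Z (2*t0)‖ := hZ2
      _ ≤ 2 * |u' t0| * Real.exp (l * (2*t0 - t0)) := hfin
      _ ≤ 2 * |u' t0| * Real.exp l := by
          exact mul_le_mul_of_nonneg_left hD (by positivity)
  have hexpand : l * (𝔠 * (l * (2*t0)) / Real.sinh l) = 2 * (𝔠 * L * t0) / Real.sinh l := by
    rw [← hl2]; field_simp
  rw [hexpand] at hcomb
  have h2 : 2 * (𝔠 * L * t0) ≤ 2 * |u' t0| * Real.exp l * Real.sinh l :=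
    (div_le_iff₀ hS).1 hcomb
  rw [div_le_iff₀ (by positivity)]
  nlinarith

noncomputable def auxγ (𝔠 L M : ℝ) : ℝ :=
  min (𝔠 * Real.sqrt L / Real.sinh (Real.sqrt L) / 2)
    (𝔠 * L * min (𝔠 * Real.sqrt L / Real.sinh (Real.sqrt L) / (2*M)) (1/2)
      / (Real.sinh (Real.sqrt L) * Real.exp (Real.sqrt L)))

lemma auxγ_pos (𝔠 L M : ℝ) (h𝔠 : 0 < 𝔠) (hL : 1 ≤ L) (hM : 0 < M) : 0 < auxγ 𝔠 L M := by
  have hL0 : (0:ℝ) < L := lt_of_lt_of_le zero_lt_one hL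
  have hl0 : 0 < Real.sqrt L := Real.sqrt_pos.2 hL0
  have hS : 0 < Real.sinh (Real.sqrt L) := Real.sinh_pos_iff.2 hl0
  have hE : 0 < Real.exp (Real.sqrt L) := Real.exp_pos _
  apply lt_min
  · positivity
  · apply div_pos ?_ (by positivity)
    apply mul_pos (by positivity)
    exact lt_min (by positivity) (by norm_num)

lemma aux_half (𝔠 c L M : ℝ) (h𝔠 : 0 < 𝔠) (hc : 0 < c) (hL : 1 ≤ L) (hM : 0 < M)
    (f : ℝ → ℝ) (K : NNReal) (hf : LipschitzWith K f) (hf0 : f 0 ≤ 0) (hcK : c * K ≤ L)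
    (u u' u'' : ℝ → ℝ)
    (hd1 : ∀ t ∈ Icc (0:ℝ) 1, HasDerivAt u (u' t) t)
    (hd2 : ∀ t ∈ Icc (0:ℝ) 1, HasDerivAt u' (u'' t) t)
    (hueq : ∀ t ∈ Icc (0:ℝ) 1, u'' t = c * f (u t))
    (hu0 : u 0 = 0) (hu1 : u 1 = 𝔠)
    (hup : ∀ t ∈ Icc (0:ℝ) 1, 0 ≤ u t)
    (hM2 : ∀ t ∈ Icc (0:ℝ) 1, |u'' t| ≤ M) :
    ∀ t0 ∈ Icc (0:ℝ) (1/2), auxγ 𝔠 L M ≤ u' t0 := by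
  have hL0 : (0:ℝ) < L := lt_of_lt_of_le zero_lt_one hL
  set l := Real.sqrt L with hldef
  have hl0 : 0 < l := Real.sqrt_pos.2 hL0
  have hS : 0 < Real.sinh l := Real.sinh_pos_iff.2 hl0
  have hE : 0 < Real.exp l := Real.exp_pos _
  set A : ℝ := 𝔠 * l / Real.sinh l with hAdef
  have hA0 : 0 < A := by positivity
  set δ : ℝ := min (A / (2*M)) (1/2) with hδdef
  have hδ0 : 0 < δ := lt_min (by positivity) (by norm_num)
  have hδh : δ ≤ 1/2 := min_le_right _ _
  have hγdef : auxγ 𝔠 L M = min (A/2) (𝔠 * L * δ / (Real.sinh l * Real.exp l)) := rfl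
  set γ := auxγ 𝔠 L M with hγ
  have hγ0 : 0 < γ := auxγ_pos 𝔠 L M h𝔠 hL hM
  have hu'0 : A ≤ u' 0 :=
    (aux_barrier 𝔠 c L h𝔠 hc hL f K hf hf0 hcK u u' u'' hd1 hd2 hueq hu0 hu1 hup).2
  -- Lipschitz bound on u'
  have hulip : ∀ x ∈ Icc (0:ℝ) 1, ∀ y ∈ Icc (0:ℝ) 1, |u' y - u' x| ≤ M * |y - x| := by
    intro x hx y hy
    have := Convex.norm_image_sub_le_of_norm_hasDerivWithin_le
      (f := u') (f' := u'') (s := Icc (0:ℝ) 1)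
      (fun t ht => (hd2 t ht).hasDerivWithinAt)
      (fun t ht => by rw [Real.norm_eq_abs]; exact hM2 t ht)
      (convex_Icc 0 1) hx hy
    rwa [Real.norm_eq_abs, Real.norm_eq_abs] at this
  -- dichotomy: γ ≤ |u' t| on [0, 1/2]
  have hkey : ∀ t ∈ Icc (0:ℝ) (1/2), γ ≤ |u' t| := by
    intro t ht
    rcases le_or_gt t δ with hcase | hcase
    · -- near the boundary
      have ht1 : t ∈ Icc (0:ℝ) 1 := ⟨ht.1, le_trans ht.2 (by norm_num)⟩
      have hlip := hulip 0 (by norm_num) t ht1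
      have habs : |t - 0| = t := by rw [sub_zero, abs_of_nonneg ht.1]
      rw [habs] at hlip
      have hMδ : M * t ≤ A/2 := by
        have : t ≤ A / (2*M) := le_trans hcase (min_le_left _ _)
        calc M * t ≤ M * (A/(2*M)) := mul_le_mul_of_nonneg_left this (le_of_lt hM)
          _ = A/2 := by field_simp
      have h1 : A/2 ≤ u' t := by
        have := abs_le.1 hlip
        linarith [this.1]
      refine le_trans ?_ (le_trans h1 (le_abs_self _))
      rw [hγdef]; exact min_le_left _ _
    · -- middle region
      have hmid := aux_middle 𝔠 c L h𝔠 hc hL f K hf hf0 hcK u u' u'' hd1 hd2 hueq hu0 hu1 hup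
        t (lt_trans hδ0 hcase) ht.2
      refine le_trans ?_ hmid
      rw [hγdef]
      refine le_trans (min_le_right _ _) ?_
      gcongr
  -- conclude positivity via IVT
  intro t0 ht0
  by_contra hcon
  push_neg at hcon
  have habs := hkey t0 ht0
  have hneg : u' t0 ≤ -γ := by
    rcases abs_cases (u' t0) with ⟨h1, _⟩ | ⟨h1, _⟩
    · linarith
    · linarith
  have hcont : ContinuousOn u' (Icc 0 t0) := by
    intro x hx
    exact ((hd2 x ⟨hx.1, le_trans hx.2 (le_trans ht0.2 (by norm_num))⟩).continuousAt).continuousWithinAt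
  have hivt := intermediate_value_Icc' ht0.1 hcont
  have h0mem : (0:ℝ) ∈ Icc (u' t0) (u' 0) := ⟨by linarith, by linarith⟩
  obtain ⟨ξ, hξmem, hξeq⟩ := hivt h0mem
  have hξ2 : ξ ∈ Icc (0:ℝ) (1/2) := ⟨hξmem.1, le_trans hξmem.2 ht0.2⟩
  have := hkey ξ hξ2
  rw [hξeq] at this
  simp at this
  linarith

/-- Non-degeneracy of the vertical derivative at far fields: with `s` continuous,
pinched in `[d̲, d̄] ⊂ (0,∞)`, tending to `1` at `-∞` and to `σ > 0` at `+∞`, and `f`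
Lipschitz with `f(0) ≤ 0 ≤ f(𝔠)`, the solutions `φ^{y1}` of
`(φ^{y1})'' = s(y1)² f(φ^{y1})`, `φ^{y1}(0) = 0`, `φ^{y1}(1) = 𝔠`, `0 < φ^{y1} < 𝔠`
satisfy `liminf_{y1 → ±∞} min_{[0,1]} (φ^{y1})' ≥ γ` for some `γ > 0`. -/
theorem stmt_10 (𝔠 dlo dhi σ : ℝ) (h𝔠 : 0 < 𝔠) (hdlo : 0 < dlo) (hd : dlo ≤ dhi)
    (hσ : 0 < σ)
    (s : ℝ → ℝ) (hscont : Continuous s)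
    (hsbd : ∀ y1, s y1 ∈ Set.Icc dlo dhi)
    (hsbot : Tendsto s atBot (nhds 1)) (hstop : Tendsto s atTop (nhds σ))
    (f : ℝ → ℝ) (K : NNReal) (hf : LipschitzWith K f)
    (hsign : f 0 ≤ 0 ∧ 0 ≤ f 𝔠)
    (φ φ' φ'' : ℝ → ℝ → ℝ)
    (hφ1 : ∀ y1, ∀ y2 ∈ Set.Icc (0:ℝ) 1, HasDerivAt (φ y1) (φ' y1 y2) y2)
    (hφ2 : ∀ y1, ∀ y2 ∈ Set.Icc (0:ℝ) 1, HasDerivAt (φ' y1) (φ'' y1 y2) y2)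
    (hφc : ∀ y1, ContinuousOn (φ'' y1) (Set.Icc 0 1))
    (heq : ∀ y1, ∀ y2 ∈ Set.Icc (0:ℝ) 1, φ'' y1 y2 = (s y1) ^ 2 * f (φ y1 y2))
    (hb0 : ∀ y1, φ y1 0 = 0) (hb1 : ∀ y1, φ y1 1 = 𝔠)
    (hpinch : ∀ y1, ∀ y2 ∈ Set.Ioo (0:ℝ) 1, 0 < φ y1 y2 ∧ φ y1 y2 < 𝔠) :
    ∃ γ : ℝ, 0 < γ
      ∧ γ ≤ Filter.liminf (fun y1 => sInf ((φ' y1) '' Set.Icc 0 1)) atTop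
      ∧ γ ≤ Filter.liminf (fun y1 => sInf ((φ' y1) '' Set.Icc 0 1)) atBot := by
  have hdhi0 : 0 < dhi := lt_of_lt_of_le hdlo hd
  set L : ℝ := dhi^2 * (K:ℝ) + 1 with hLdef
  set M : ℝ := dhi^2 * (|f 0| + 2*(K:ℝ)*𝔠) + 1 with hMdef
  have hK0 : (0:ℝ) ≤ (K:ℝ) := K.coe_nonneg
  have hL1 : 1 ≤ L := by nlinarith [sq_nonneg dhi]
  have hM0 : 0 < M := by positivity
  set γ := auxγ 𝔠 L M with hγdef
  have hγ0 : 0 < γ := auxγ_pos 𝔠 L M h𝔠 hL1 hM0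
  -- uniform pointwise lower bound on φ'
  have hpt : ∀ y1, ∀ t ∈ Icc (0:ℝ) 1, γ ≤ φ' y1 t := by
    intro y1
    set c : ℝ := s y1 ^ 2 with hcdef
    obtain ⟨hs1, hs2⟩ := hsbd y1
    have hsy0 : 0 < s y1 := lt_of_lt_of_le hdlo hs1
    have hc0 : 0 < c := by positivity
    have hcb : c ≤ dhi^2 := by nlinarith
    have hcK : c * (K:ℝ) ≤ L := by nlinarith
    have hbox : ∀ t ∈ Icc (0:ℝ) 1, 0 ≤ φ y1 t ∧ φ y1 t ≤ 𝔠 := by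
      intro t ht
      rcases eq_or_lt_of_le ht.1 with h0 | h0
      · rw [← h0, hb0 y1]; exact ⟨le_refl 0, le_of_lt h𝔠⟩
      rcases eq_or_lt_of_le ht.2 with h1 | h1
      · rw [h1, hb1 y1]; exact ⟨le_of_lt h𝔠, le_refl 𝔠⟩
      · have := hpinch y1 t ⟨h0, h1⟩
        exact ⟨le_of_lt this.1, le_of_lt this.2⟩
    have hM2 : ∀ t ∈ Icc (0:ℝ) 1, |φ'' y1 t| ≤ M := by
      intro t ht
      rw [heq y1 t ht]
      have hlf : |f (φ y1 t) - f 0| ≤ (K:ℝ) * |φ y1 t - 0| := by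
        have := hf.dist_le_mul (φ y1 t) 0
        rwa [Real.dist_eq, Real.dist_eq] at this
      have hb := hbox t ht
      have habs : |φ y1 t - 0| ≤ 𝔠 := by
        rw [sub_zero, abs_of_nonneg hb.1]; exact hb.2
      have hfb : |f (φ y1 t)| ≤ |f 0| + (K:ℝ) * 𝔠 := by
        have h1 : |f (φ y1 t)| ≤ |f 0| + |f (φ y1 t) - f 0| := by
          have := abs_add_le (f 0) (f (φ y1 t) - f 0)
          simpa using this
        have h2 : (K:ℝ) * |φ y1 t - 0| ≤ (K:ℝ) * 𝔠 := mul_le_mul_of_nonneg_left habs hK0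
        linarith
      rw [abs_mul, abs_of_pos hc0]
      have : c * |f (φ y1 t)| ≤ dhi^2 * (|f 0| + (K:ℝ)*𝔠) := by
        apply mul_le_mul hcb hfb (abs_nonneg _) (by positivity)
      have h3 : dhi^2 * (|f 0| + (K:ℝ)*𝔠) ≤ M := by nlinarith [abs_nonneg (f 0), sq_nonneg dhi]
      linarith
    have hsq : s y1 ^ 2 = c := rfl
    have hhalf1 := aux_half 𝔠 c L M h𝔠 hc0 hL1 hM0 f K hf hsign.1 hcK
      (φ y1) (φ' y1) (φ'' y1) (hφ1 y1) (hφ2 y1)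
      (fun t ht => by rw [heq y1 t ht]) (hb0 y1) (hb1 y1)
      (fun t ht => (hbox t ht).1) hM2
    -- reflected solution
    set g : ℝ → ℝ := fun x => -f (𝔠 - x) with hgdef
    have hg : LipschitzWith K g := by
      apply LipschitzWith.of_dist_le_mul
      intro a b
      simp only [hgdef, Real.dist_eq]
      have := hf.dist_le_mul (𝔠 - a) (𝔠 - b)
      rw [Real.dist_eq, Real.dist_eq] at this
      calc |(-f (𝔠 - a)) - (-f (𝔠 - b))| = |f (𝔠 - a) - f (𝔠 - b)| := by
            rw [← abs_neg]; ring_nf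
        _ ≤ (K:ℝ) * |𝔠 - a - (𝔠 - b)| := this
        _ = (K:ℝ) * |a - b| := by rw [show 𝔠 - a - (𝔠 - b) = -(a-b) by ring, abs_neg]
    have hg0 : g 0 ≤ 0 := by simp only [hgdef, sub_zero]; linarith [hsign.2]
    set v : ℝ → ℝ := fun t => 𝔠 - φ y1 (1 - t) with hvdef
    set v' : ℝ → ℝ := fun t => φ' y1 (1 - t) with hv'def
    set v'' : ℝ → ℝ := fun t => -(φ'' y1 (1 - t)) with hv''def
    have hmem1 : ∀ t ∈ Icc (0:ℝ) 1, (1 - t) ∈ Icc (0:ℝ) 1 :=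
      fun t ht => ⟨by linarith [ht.2], by linarith [ht.1]⟩
    have hvd1 : ∀ t ∈ Icc (0:ℝ) 1, HasDerivAt v (v' t) t := by
      intro t ht
      have hin : HasDerivAt (fun x : ℝ => 1 - x) (-1) t := (hasDerivAt_id t).const_sub 1
      have h1 := (hφ1 y1 (1 - t) (hmem1 t ht)).comp t hin
      have h2 := h1.const_sub 𝔠
      refine h2.congr_deriv ?_
      simp only [hv'def]; ring
    have hvd2 : ∀ t ∈ Icc (0:ℝ) 1, HasDerivAt v' (v'' t) t := by
      intro t ht
      have hin : HasDerivAt (fun x : ℝ => 1 - x) (-1) t := (hasDerivAt_id t).const_sub 1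
      have h1 := (hφ2 y1 (1 - t) (hmem1 t ht)).comp t hin
      refine h1.congr_deriv ?_
      simp only [hv''def]; ring
    have hveq : ∀ t ∈ Icc (0:ℝ) 1, v'' t = c * g (v t) := by
      intro t ht
      simp only [hv''def, hvdef, hgdef]
      rw [heq y1 (1-t) (hmem1 t ht)]
      rw [show 𝔠 - (𝔠 - φ y1 (1 - t)) = φ y1 (1 - t) by ring]
      rw [hsq]; ring
    have hv0 : v 0 = 0 := by simp [hvdef, hb1 y1]
    have hv1 : v 1 = 𝔠 := by simp [hvdef, hb0 y1]
    have hvp : ∀ t ∈ Icc (0:ℝ) 1, 0 ≤ v t := by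
      intro t ht
      simp only [hvdef]
      linarith [(hbox (1-t) (hmem1 t ht)).2]
    have hvM : ∀ t ∈ Icc (0:ℝ) 1, |v'' t| ≤ M := by
      intro t ht
      simp only [hv''def, abs_neg]
      exact hM2 (1-t) (hmem1 t ht)
    have hhalf2 := aux_half 𝔠 c L M h𝔠 hc0 hL1 hM0 g K hg hg0 hcK
      v v' v'' hvd1 hvd2 hveq hv0 hv1 hvp hvM
    intro t ht
    rcases le_or_gt t (1/2) with hh | hh
    · exact hhalf1 t ⟨ht.1, hh⟩
    · have := hhalf2 (1 - t) ⟨by linarith [ht.2], by linarith⟩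
      simpa [hv'def, show 1 - (1 - t) = t by ring] using this
  -- bounds on the inf
  have hInflb : ∀ y1, γ ≤ sInf (φ' y1 '' Icc 0 1) := by
    intro y1
    apply le_csInf ⟨φ' y1 0, mem_image_of_mem _ (by norm_num : (0:ℝ) ∈ Icc (0:ℝ) 1)⟩
    rintro x ⟨t, ht, rfl⟩
    exact hpt y1 t ht
  have hbdd : ∀ y1, BddBelow (φ' y1 '' Icc 0 1) := by
    intro y1
    refine ⟨γ, ?_⟩
    rintro x ⟨t, ht, rfl⟩
    exact hpt y1 t ht
  have hInfub : ∀ y1, sInf (φ' y1 '' Icc 0 1) ≤ 𝔠 := by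
    intro y1
    have hcont : ContinuousOn (φ y1) (Icc 0 1) :=
      fun t ht => ((hφ1 y1 t ht).continuousAt).continuousWithinAt
    obtain ⟨ξ, hξ, hξeq⟩ := exists_hasDerivAt_eq_slope (φ y1) (φ' y1)
      (by norm_num : (0:ℝ) < 1) hcont
      (fun x hx => hφ1 y1 x ⟨le_of_lt hx.1, le_of_lt hx.2⟩)
    have hval : φ' y1 ξ = 𝔠 := by
      rw [hξeq, hb1, hb0]; simp
    calc sInf (φ' y1 '' Icc 0 1) ≤ φ' y1 ξ :=
          csInf_le (hbdd y1) (mem_image_of_mem _ ⟨le_of_lt hξ.1, le_of_lt hξ.2⟩)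
      _ = 𝔠 := hval
  refine ⟨γ, hγ0, ?_, ?_⟩
  · refine le_liminf_of_le ?_ (Eventually.of_forall hInflb)
    exact (isBoundedUnder_of ⟨𝔠, hInfub⟩).isCoboundedUnder_ge
  · refine le_liminf_of_le ?_ (Eventually.of_forall hInflb)
    exact (isBoundedUnder_of ⟨𝔠, hInfub⟩).isCoboundedUnder_ge
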